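/- For every reduced π-ordered BDD B over a finite set PVar of Boolean variables and Act, and every bijection γ from PVar onto a set of axis-aligned predicates, there exists a reduced π-ordered BDD B' over PVar and Act that is predicate consistent with respect to γ and has the same semantics modulo γ as B, i.e. ⟦B'⟧(γ^ε) = ⟦B⟧(γ^ε) for every evaluation ε : Var → D. -/

import Mathlib

/-- Comparison relations for axis-aligned predicates. -/
inductive Cmp where
  | eq | ge | gt
deriving DecidableEq

/-- An axis-aligned predicate `x ∼ c` over variables `Var` and domain `ℚ`. -/
structure APred (Var : Type) where
  x : Var
  cmp : Cmp
  c : ℚ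

/-- Satisfaction of an axis-aligned predicate by an evaluation `ε : Var → ℚ`. -/
def APred.holds {Var : Type} (ε : Var → ℚ) (p : APred Var) : Bool :=
  match p.cmp with
  | .eq => decide (ε p.x = p.c)
  | .ge => decide (p.c ≤ ε p.x)
  | .gt => decide (p.c < ε p.x)

/-- A (multi-terminal) decision diagram with decision nodes labeled by `L`
and action nodes labeled by subsets of `Act`.  A rank function ensures
acyclicity.  Taking `L` to be a type of Boolean variables yields BDDs;
taking `L = APred Var` yields PDDs. -/
structure DD (L : Type) (Act : Type) where
  /-- the (finite) set of nodes -/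
  N : Type
  fin : Fintype N
  /-- decision nodes are labeled by `Sum.inl l` with `l : L`;
  action nodes are labeled by `Sum.inr A` with `A ⊆ Act`. -/
  label : N → L ⊕ Set Act
  /-- successor function (its values on action nodes are irrelevant) -/
  succ : N → Bool → N
  root : N
  rk : N → ℕ
  rk_lt : ∀ n b l, label n = Sum.inl l → rk (succ n b) < rk n

/-- Semantics of the subdiagram rooted at `n`, given a Boolean valuation of labels. -/
def DD.semNode {L Act : Type} (B : DD L Act) (f : L → Bool) (n : B.N) : Set Act :=
  match h : B.label n with
  | Sum.inr A => A
  | Sum.inl l => B.semNode f (B.succ n (f l))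
termination_by B.rk n
decreasing_by exact B.rk_lt n (f l) l h

/-- Semantics of a decision diagram, given a Boolean valuation of its labels. -/
def DD.sem {L Act : Type} (B : DD L Act) (f : L → Bool) : Set Act :=
  B.semNode f B.root

/-- A node is a decision node iff its label is a left injection. -/
def DD.IsDecision {L Act : Type} (B : DD L Act) (n : B.N) : Prop :=
  ∃ l, B.label n = Sum.inl l

/-- `π`-orderedness: labels strictly increase (w.r.t. the ranking `π` of labels)
along edges between decision nodes. -/
def DD.Ordered {L Act : Type} (B : DD L Act) (π : L → ℕ) : Prop :=
  ∀ n b l l', B.label n = Sum.inl l → B.label (B.succ n b) = Sum.inl l' → π l < π l'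

/-- The edge relation of a decision diagram. -/
def DD.Edge {L Act : Type} (B : DD L Act) (n m : B.N) : Prop :=
  B.IsDecision n ∧ ∃ b, m = B.succ n b

/-- The set of nodes reachable from `n`. -/
def DD.Reach {L Act : Type} (B : DD L Act) (n : B.N) : Set B.N :=
  {m | Relation.ReflTransGen B.Edge n m}

/-- Isomorphism of the subdiagrams rooted at `n` and `n'`: a bijection between
the reachable node sets mapping root to root and preserving labels and successors. -/
def DD.Iso {L Act : Type} (B : DD L Act) (n n' : B.N) : Prop :=
  ∃ φ : B.N → B.N,
    Set.BijOn φ (B.Reach n) (B.Reach n') ∧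
    φ n = n' ∧
    (∀ m ∈ B.Reach n, B.label (φ m) = B.label m) ∧
    (∀ m ∈ B.Reach n, B.IsDecision m → ∀ b, φ (B.succ m b) = B.succ (φ m) b)

/-- Reducedness: every decision node is essential and no two distinct nodes
root isomorphic subdiagrams. -/
def DD.Reduced {L Act : Type} (B : DD L Act) : Prop :=
  (∀ n, B.IsDecision n → B.succ n false ≠ B.succ n true) ∧
  (∀ n n', B.Iso n n' → n = n')

/-- Following a sequence of decision bits from a node. -/
def DD.follow {L Act : Type} (B : DD L Act) : B.N → List Bool → B.N
  | n, [] => n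
  | n, b :: bs => B.follow (B.succ n b) bs

/-- `bs` encodes a path from the root to an action node: all intermediate nodes
are decision nodes and the final node is an action node. -/
def DD.IsPathToAction {L Act : Type} (B : DD L Act) (bs : List Bool) : Prop :=
  (∀ i, i < bs.length → B.IsDecision (B.follow B.root (bs.take i))) ∧
  (∃ A : Set Act, B.label (B.follow B.root bs) = Sum.inr A)

/-- Predicate decision diagrams: decision diagrams labeled by axis-aligned predicates. -/
abbrev PDD (Var Act : Type) := DD (APred Var) Act

/-- Semantics of a PDD on an evaluation `ε : Var → ℚ`. -/
def PDD.sem {Var Act : Type} (P : PDD Var Act) (ε : Var → ℚ) : Set Act :=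
  DD.sem P (fun p => p.holds ε)

/-- The path encoded by `bs` is consistent with the evaluation `ε`:
at every step, the decision bit matches the truth value of the node's predicate. -/
def PDD.PathConsistentWith {Var Act : Type} (P : PDD Var Act) (bs : List Bool)
    (ε : Var → ℚ) : Prop :=
  ∀ i, (h : i < bs.length) → ∀ p, P.label (P.follow P.root (bs.take i)) = Sum.inl p →
    p.holds ε = bs.get ⟨i, h⟩

/-- A PDD is consistent if every path from the root to an action node is
consistent with some evaluation. -/
def PDD.Consistent {Var Act : Type} (P : PDD Var Act) : Prop :=
  ∀ bs : List Bool, P.IsPathToAction bs → ∃ ε : Var → ℚ, P.PathConsistentWith bs ε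

/-- The `γ`-lifting of an evaluation `ε : Var → ℚ` to a Boolean valuation of `PVar`. -/
def liftEval {Var PVar : Type} (γ : PVar → APred Var) (ε : Var → ℚ) : PVar → Bool :=
  fun x => (γ x).holds ε

/-- The PDD `γ(B)` arising from a BDD `B` by relabeling every decision node `d`
with the predicate `γ (λ d)`. -/
def DD.relabel {L L' Act : Type} (B : DD L Act) (γ : L → L') : DD L' Act where
  N := B.N
  fin := B.fin
  label := fun n => (B.label n).map γ id
  succ := B.succ
  root := B.root
  rk := B.rk
  rk_lt := by
    intro n b l' h
    cases hl : B.label n with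
    | inl l => exact B.rk_lt n b l hl
    | inr A => simp [hl, Sum.map] at h

theorem DD.semNode_inr {L Act : Type} (B : DD L Act) (f : L → Bool) (n : B.N) (A : Set Act)
    (h : B.label n = Sum.inr A) : B.semNode f n = A := by
  rw [DD.semNode]
  split <;> simp_all

theorem DD.semNode_inl {L Act : Type} (B : DD L Act) (f : L → Bool) (n : B.N) (l : L)
    (h : B.label n = Sum.inl l) : B.semNode f n = B.semNode f (B.succ n (f l)) := by
  rw [DD.semNode]
  split <;> simp_all

namespace PCAux

open Classical Function

variable {Var PVar Act : Type}

/-- Explicit decision trees. -/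
inductive T (PVar Act : Type) where
  | leaf (A : Set Act)
  | node (x : PVar) (t0 t1 : T PVar Act)

namespace T

/-- list of all subtrees -/
def subts : T PVar Act → List (T PVar Act)
  | leaf A => [leaf A]
  | node x a b => node x a b :: (subts a ++ subts b)

theorem mem_subts_self : ∀ t : T PVar Act, t ∈ subts t
  | leaf A => by simp [subts]
  | node x a b => by simp [subts]

theorem mem_subts_left {x : PVar} {a b : T PVar Act} : a ∈ subts (node x a b) := by
  simp [subts, mem_subts_self]

theorem mem_subts_right {x : PVar} {a b : T PVar Act} : b ∈ subts (node x a b) := by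
  simp [subts, mem_subts_self]

theorem subts_subset : ∀ {t s : T PVar Act}, s ∈ subts t → subts s ⊆ subts t := by
  intro t
  induction t with
  | leaf A =>
    intro s hs
    simp [subts] at hs
    subst hs; intro u hu; exact hu
  | node x a b iha ihb =>
    intro s hs
    simp only [subts, List.mem_cons, List.mem_append] at hs
    rcases hs with hs | hs | hs
    · subst hs; exact fun u hu => hu
    · intro u hu
      simp only [subts, List.mem_cons, List.mem_append]
      exact Or.inr (Or.inl (iha hs hu))
    · intro u hu
      simp only [subts, List.mem_cons, List.mem_append]
      exact Or.inr (Or.inr (ihb hs hu))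

/-- height -/
def ht : T PVar Act → ℕ
  | leaf _ => 0
  | node _ a b => max (ht a) (ht b) + 1

/-- evaluation -/
def evalT (f : PVar → Bool) : T PVar Act → Set Act
  | leaf A => A
  | node x a b => if f x then evalT f b else evalT f a

/-- following a bit string -/
def followT : T PVar Act → List Bool → T PVar Act
  | t, [] => t
  | leaf A, _ :: bs => followT (leaf A) bs
  | node _ a _, false :: bs => followT a bs
  | node _ _ b, true :: bs => followT b bs

theorem followT_leaf (A : Set Act) : ∀ bs : List Bool, followT (leaf A : T PVar Act) bs = leaf A
  | [] => rfl
  | _ :: bs => followT_leaf A bs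

end T

/-- realizability of a partial assignment (on variables of level `< m`) -/
def Real (γ : PVar → APred Var) (π : PVar → ℕ) (m : ℕ) (σ : PVar → Bool) : Prop :=
  ∃ ε : Var → ℚ, ∀ x, π x < m → (γ x).holds ε = σ x

theorem Real.zero (γ : PVar → APred Var) (π : PVar → ℕ) (σ : PVar → Bool) :
    Real γ π 0 σ := ⟨fun _ => 0, fun x hx => absurd hx (Nat.not_lt_zero _)⟩

theorem Real.up {γ : PVar → APred Var} {π : PVar → ℕ} {m : ℕ} {σ : PVar → Bool}
    (hnv : ¬ ∃ x, π x = m) (h : Real γ π m σ) : Real γ π (m+1) σ := by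
  obtain ⟨ε, hε⟩ := h
  refine ⟨ε, fun x hx => ?_⟩
  rcases Nat.lt_succ_iff_lt_or_eq.1 hx with h' | h'
  · exact hε x h'
  · exact absurd ⟨x, h'⟩ hnv

theorem Real.step {γ : PVar → APred Var} {π : PVar → ℕ} (hπ : Function.Injective π)
    {m : ℕ} {σ : PVar → Bool} {x : PVar} (hx : π x = m) (h : Real γ π m σ) :
    ∃ b, Real γ π (m+1) (Function.update σ x b) := by
  obtain ⟨ε, hε⟩ := h
  refine ⟨(γ x).holds ε, ε, fun y hy => ?_⟩
  rcases Nat.lt_succ_iff_lt_or_eq.1 hy with h' | h'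
  · have hyx : y ≠ x := fun he => by subst he; omega
    rw [Function.update_of_ne hyx]
    exact hε y h'
  · have : y = x := hπ (by rw [hx, h'])
    subst this
    rw [Function.update_self]

/-- the main construction: refine `B.sem` into a consistent decision tree,
processing predicate variables in `π`-order (level `m`, with fuel `k`). -/
noncomputable def build (B : DD PVar Act) (γ : PVar → APred Var) (π : PVar → ℕ) :
    ℕ → ℕ → (PVar → Bool) → T PVar Act
  | 0, _, σ => .leaf (B.sem σ)
  | k+1, m, σ =>
    if h : ∃ x, π x = m then
      if Real γ π (m+1) (Function.update σ h.choose true) then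
        if Real γ π (m+1) (Function.update σ h.choose false) then
          if build B γ π k (m+1) (Function.update σ h.choose false)
              = build B γ π k (m+1) (Function.update σ h.choose true) then
            build B γ π k (m+1) (Function.update σ h.choose false)
          else
            .node h.choose (build B γ π k (m+1) (Function.update σ h.choose false))
              (build B γ π k (m+1) (Function.update σ h.choose true))
        else build B γ π k (m+1) (Function.update σ h.choose true)
      else build B γ π k (m+1) (Function.update σ h.choose false)
    else build B γ π k (m+1) σ

end PCAux
namespace PCAux

open Classical Function

variable {Var PVar Act : Type}

/-- every decision node built is essential -/
theorem build_ess (B : DD PVar Act) (γ : PVar → APred Var) (π : PVar → ℕ) :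
    ∀ (k m : ℕ) (σ : PVar → Bool) {x : PVar} {a b : T PVar Act},
      T.node x a b ∈ (build B γ π k m σ).subts → a ≠ b := by
  intro k
  induction k with
  | zero =>
    intro m σ x a b hmem
    simp [build, T.subts] at hmem
  | succ k ih =>
    intro m σ x a b hmem
    rw [build] at hmem
    split at hmem
    · split at hmem
      · split at hmem
        · split at hmem
          · exact ih _ _ hmem
          · rename_i hne
            simp only [T.subts, List.mem_cons, List.mem_append] at hmem
            rcases hmem with hmem | hmem | hmem
            · cases hmem; exact hne
            · exact ih _ _ hmem
            · exact ih _ _ hmem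
        · exact ih _ _ hmem
      · exact ih _ _ hmem
    · exact ih _ _ hmem

end PCAux
namespace PCAux

open Classical Function

variable {Var PVar Act : Type}

/-- labels strictly increase along the built tree -/
theorem build_ord (B : DD PVar Act) (γ : PVar → APred Var) (π : PVar → ℕ) :
    ∀ (k m : ℕ) (σ : PVar → Bool) {x : PVar} {a b : T PVar Act},
      T.node x a b ∈ (build B γ π k m σ).subts →
        m ≤ π x ∧ ∀ {y : PVar} {a' b' : T PVar Act},
          (T.node y a' b' ∈ a.subts ∨ T.node y a' b' ∈ b.subts) → π x < π y := by
  intro k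
  induction k with
  | zero =>
    intro m σ x a b hmem
    simp [build, T.subts] at hmem
  | succ k ih =>
    intro m σ x a b hmem
    rw [build] at hmem
    have weaken : ∀ {σ' : PVar → Bool}, T.node x a b ∈ (build B γ π k (m+1) σ').subts →
        m ≤ π x ∧ ∀ {y : PVar} {a' b' : T PVar Act},
          (T.node y a' b' ∈ a.subts ∨ T.node y a' b' ∈ b.subts) → π x < π y := by
      intro σ' h
      obtain ⟨h1, h2⟩ := ih (m+1) σ' h
      exact ⟨le_trans (Nat.le_succ m) h1, h2⟩
    split at hmem
    · rename_i hex
      split at hmem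
      · split at hmem
        · split at hmem
          · exact weaken hmem
          · simp only [T.subts, List.mem_cons, List.mem_append] at hmem
            rcases hmem with hmem | hmem | hmem
            · cases hmem
              refine ⟨le_of_eq hex.choose_spec.symm, ?_⟩
              intro y a' b' hy
              rw [hex.choose_spec]
              rcases hy with hy | hy
              · exact lt_of_lt_of_le (Nat.lt_succ_self m) (ih (m+1) _ hy).1
              · exact lt_of_lt_of_le (Nat.lt_succ_self m) (ih (m+1) _ hy).1
            · exact weaken hmem
            · exact weaken hmem
        · exact weaken hmem
      · exact weaken hmem
    · exact weaken hmem

end PCAux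
namespace PCAux

open Classical Function

variable {Var PVar Act : Type}

/-- every path through the built tree is consistent with some evaluation -/
theorem build_consist (B : DD PVar Act) (γ : PVar → APred Var) (π : PVar → ℕ)
    (hπ : Function.Injective π) :
    ∀ (k m : ℕ) (σ : PVar → Bool) (bs : List Bool), Real γ π m σ →
      ∃ ε : Var → ℚ, (∀ x, π x < m → (γ x).holds ε = σ x) ∧
        ∀ (i : ℕ) (h : i < bs.length) {x : PVar} {a b : T PVar Act},
          (build B γ π k m σ).followT (bs.take i) = T.node x a b →
          (γ x).holds ε = bs.get ⟨i, h⟩ := by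
  intro k
  induction k with
  | zero =>
    intro m σ bs hreal
    obtain ⟨ε, hε⟩ := hreal
    refine ⟨ε, hε, ?_⟩
    intro i h x a b hfol
    rw [build, T.followT_leaf] at hfol
    cases hfol
  | succ k ih =>
    intro m σ bs hreal
    rw [build]
    split
    · rename_i hex
      set x := hex.choose with hxdef
      have hx : π x = m := hex.choose_spec
      -- the value of x is forced in any realizable extension:
      have hstep := Real.step hπ hx hreal
      have agree_lower : ∀ (c : Bool) (ε : Var → ℚ),
          (∀ y, π y < m + 1 → (γ y).holds ε = Function.update σ x c y) →
          ∀ y, π y < m → (γ y).holds ε = σ y := by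
        intro c ε hε y hy
        have hyx : y ≠ x := fun he => by rw [he, hx] at hy; omega
        have := hε y (Nat.lt_succ_of_lt hy)
        rwa [Function.update_of_ne hyx] at this
      split
      · rename_i hT
        split
        · rename_i hF
          split
          · -- merged
            obtain ⟨ε, hε, hcons⟩ := ih (m+1) (Function.update σ x false) bs hF
            exact ⟨ε, agree_lower false ε hε, hcons⟩
          · -- genuine node
            cases bs with
            | nil =>
              obtain ⟨ε, hε⟩ := hreal
              exact ⟨ε, hε, fun i h => by simp at h⟩
            | cons c bs' =>
              have hrealc : Real γ π (m+1) (Function.update σ x c) := by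
                cases c
                · exact hF
                · exact hT
              obtain ⟨ε, hε, hcons⟩ := ih (m+1) (Function.update σ x c) bs' hrealc
              refine ⟨ε, agree_lower c ε hε, ?_⟩
              intro i h y a b hfol
              cases i with
              | zero =>
                simp only [List.take_zero, T.followT] at hfol
                cases hfol
                have hxx := hε x (by rw [hx]; omega)
                rw [Function.update_self] at hxx
                simpa using hxx
              | succ j =>
                have hj : j < bs'.length := by simpa using h
                have hfol' : (build B γ π k (m+1) (Function.update σ x c)).followT
                    (bs'.take j) = T.node y a b := by
                  rw [List.take_succ_cons] at hfol
                  cases c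
                  · simpa [T.followT] using hfol
                  · simpa [T.followT] using hfol
                have := hcons j hj hfol'
                simpa using this
        · rename_i hF
          -- x is forced to true
          have hrT : Real γ π (m+1) (Function.update σ x true) := by
            obtain ⟨b, hb⟩ := hstep
            cases b
            · exact absurd hb hF
            · exact hb
          obtain ⟨ε, hε, hcons⟩ := ih (m+1) (Function.update σ x true) bs hrT
          exact ⟨ε, agree_lower true ε hε, hcons⟩
      · rename_i hT
        have hrF : Real γ π (m+1) (Function.update σ x false) := by
          obtain ⟨b, hb⟩ := hstep
          cases b
          · exact hb
          · exact absurd hb hT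
        obtain ⟨ε, hε, hcons⟩ := ih (m+1) (Function.update σ x false) bs hrF
        exact ⟨ε, agree_lower false ε hε, hcons⟩
    · rename_i hex
      obtain ⟨ε, hε, hcons⟩ := ih (m+1) σ bs (Real.up hex hreal)
      exact ⟨ε, fun y hy => hε y (Nat.lt_succ_of_lt hy), hcons⟩

end PCAux
namespace PCAux

open Classical Function

variable {Var PVar Act : Type}

/-- on liftings of evaluations, the built tree computes `B.sem` -/
theorem build_sem (B : DD PVar Act) (γ : PVar → APred Var) (π : PVar → ℕ)
    (hπ : Function.Injective π) :
    ∀ (k m : ℕ) (σ : PVar → Bool), (∀ x : PVar, π x < m + k) →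
      ∀ ε : Var → ℚ, (∀ x, π x < m → liftEval γ ε x = σ x) →
        T.evalT (liftEval γ ε) (build B γ π k m σ) = B.sem (liftEval γ ε) := by
  intro k
  induction k with
  | zero =>
    intro m σ hbound ε hσ
    have : liftEval γ ε = σ := funext fun x => hσ x (by simpa using hbound x)
    rw [build, this]
    rfl
  | succ k ih =>
    intro m σ hbound ε hσ
    have hbound' : ∀ x : PVar, π x < (m + 1) + k := fun x => by have := hbound x; omega
    rw [build]
    split
    · rename_i hex
      set x := hex.choose with hxdef
      have hx : π x = m := hex.choose_spec
      have hkey : ∀ c : Bool, liftEval γ ε x = c →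
          Real γ π (m+1) (Function.update σ x c) := by
        intro c hc
        refine ⟨ε, fun y hy => ?_⟩
        by_cases hyx : y = x
        · subst hyx
          rw [Function.update_self, ← hc]
          rfl
        · have hy' : π y < m := by
            rcases Nat.lt_succ_iff_lt_or_eq.1 hy with h' | h'
            · exact h'
            · exact absurd (hπ (h'.trans hx.symm)) hyx
          rw [Function.update_of_ne hyx]
          exact hσ y hy'
      have hIH : ∀ c : Bool, liftEval γ ε x = c →
          T.evalT (liftEval γ ε) (build B γ π k (m+1) (Function.update σ x c))
            = B.sem (liftEval γ ε) := by
        intro c hc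
        refine ih (m+1) _ hbound' ε fun y hy => ?_
        by_cases hyx : y = x
        · subst hyx
          rw [Function.update_self, hc]
        · have hy' : π y < m := by
            rcases Nat.lt_succ_iff_lt_or_eq.1 hy with h' | h'
            · exact h'
            · exact absurd (hπ (h'.trans hx.symm)) hyx
          rw [Function.update_of_ne hyx]
          exact hσ y hy'
      split
      · rename_i hT
        split
        · rename_i hF
          split
          · rename_i heq
            cases hc : liftEval γ ε x with
            | false => exact hIH false hc
            | true => rw [heq]; exact hIH true hc
          · cases hc : liftEval γ ε x with
            | false => simpa [T.evalT, hc] using hIH false hc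
            | true => simpa [T.evalT, hc] using hIH true hc
        · rename_i hF
          have hc : liftEval γ ε x = true := by
            cases hc : liftEval γ ε x with
            | false => exact absurd (hkey false hc) hF
            | true => rfl
          exact hIH true hc
      · rename_i hT
        have hc : liftEval γ ε x = false := by
          cases hc : liftEval γ ε x with
          | false => rfl
          | true => exact absurd (hkey true hc) hT
        exact hIH false hc
    · rename_i hex
      refine ih (m+1) σ hbound' ε fun y hy => ?_
      rcases Nat.lt_succ_iff_lt_or_eq.1 hy with h' | h'
      · exact hσ y h'
      · exact absurd ⟨y, h'⟩ hex

end PCAux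
namespace PCAux

open Classical Function

variable {Var PVar Act : Type}

/-- the root tree of the construction -/
noncomputable def rootT [Fintype PVar] (B : DD PVar Act) (γ : PVar → APred Var)
    (π : PVar → ℕ) : T PVar Act :=
  build B γ π ((Finset.univ.sup π) + 1) 0 (fun _ => false)

theorem lt_bound [Fintype PVar] (π : PVar → ℕ) (x : PVar) :
    π x < 0 + ((Finset.univ.sup π) + 1) := by
  have : π x ≤ Finset.univ.sup π := Finset.le_sup (Finset.mem_univ x)
  omega

/-- the constructed decision diagram -/
noncomputable def BDD' [Fintype PVar] (B : DD PVar Act) (γ : PVar → APred Var)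
    (π : PVar → ℕ) : DD PVar Act where
  N := {t : T PVar Act // t ∈ (rootT B γ π).subts}
  fin := by
    haveI : DecidableEq (T PVar Act) := Classical.decEq _
    exact Fintype.subtype ((rootT B γ π).subts).toFinset (fun t => List.mem_toFinset)
  label := fun n =>
    match n.1 with
    | .leaf A => Sum.inr A
    | .node x _ _ => Sum.inl x
  succ := fun n c =>
    match n, c with
    | ⟨.leaf A, h⟩, _ => ⟨.leaf A, h⟩
    | ⟨.node _ a _, h⟩, false => ⟨a, T.subts_subset h T.mem_subts_left⟩
    | ⟨.node _ _ b, h⟩, true => ⟨b, T.subts_subset h T.mem_subts_right⟩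
  root := ⟨rootT B γ π, T.mem_subts_self _⟩
  rk := fun n => n.1.ht
  rk_lt := by
    rintro ⟨t, ht⟩ c l hl
    cases t with
    | leaf A => exact absurd hl Sum.inr_ne_inl
    | node x a b =>
      cases c
      · show T.ht a < T.ht (T.node x a b)
        simp [T.ht]
      · show T.ht b < T.ht (T.node x a b)
        simp [T.ht]

variable [Fintype PVar] (B : DD PVar Act) (γ : PVar → APred Var) (π : PVar → ℕ)

theorem follow_val : ∀ (bs : List Bool) (n : (BDD' B γ π).N),
    ((BDD' B γ π).follow n bs).1 = n.1.followT bs := by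
  intro bs
  induction bs with
  | nil => intro n; simp [DD.follow, T.followT]
  | cons c bs ih =>
    rintro ⟨t, h⟩
    cases t with
    | leaf A =>
      cases c <;> exact ih ⟨T.leaf A, h⟩
    | node x a b =>
      cases c
      · exact ih ⟨a, T.subts_subset h T.mem_subts_left⟩
      · exact ih ⟨b, T.subts_subset h T.mem_subts_right⟩

theorem semNode_eval : ∀ (t : T PVar Act) (h : t ∈ (rootT B γ π).subts) (f : PVar → Bool),
    (BDD' B γ π).semNode f ⟨t, h⟩ = T.evalT f t := by
  intro t
  induction t with
  | leaf A =>
    intro h f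
    exact DD.semNode_inr _ _ _ A rfl
  | node x a b iha ihb =>
    intro h f
    rw [DD.semNode_inl (BDD' B γ π) f ⟨T.node x a b, h⟩ x rfl]
    cases hfx : f x
    · show (BDD' B γ π).semNode f ⟨a, _⟩ = _
      rw [iha]
      simp [T.evalT, hfx]
    · show (BDD' B γ π).semNode f ⟨b, _⟩ = _
      rw [ihb]
      simp [T.evalT, hfx]

end PCAux
namespace PCAux

open Classical Function

variable {Var PVar Act : Type}

theorem reach_sub {L Act : Type} (B : DD L Act) {n m : B.N} (hm : m ∈ B.Reach n) :
    B.Reach m ⊆ B.Reach n := fun _ hq => Relation.ReflTransGen.trans hm hq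

theorem reach_succ {L Act : Type} (B : DD L Act) {n : B.N} (hd : B.IsDecision n) (c : Bool) :
    B.succ n c ∈ B.Reach n :=
  Relation.ReflTransGen.single ⟨hd, c, rfl⟩

/-- an isomorphism restricts to an isomorphism of reachable subdiagrams -/
theorem iso_sub {L Act : Type} (B : DD L Act) (φ : B.N → B.N) (n n' : B.N)
    (h1 : Set.BijOn φ (B.Reach n) (B.Reach n'))
    (h2 : φ n = n')
    (h3 : ∀ m ∈ B.Reach n, B.label (φ m) = B.label m)
    (h4 : ∀ m ∈ B.Reach n, B.IsDecision m → ∀ b, φ (B.succ m b) = B.succ (φ m) b)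
    {m : B.N} (hm : m ∈ B.Reach n) : B.Iso m (φ m) := by
  have hsub : B.Reach m ⊆ B.Reach n := reach_sub B hm
  have hedge : ∀ p q, p ∈ B.Reach n → B.Edge p q → B.Edge (φ p) (φ q) := by
    rintro p q hp ⟨⟨l, hl⟩, c, hc⟩
    refine ⟨⟨l, ?_⟩, c, ?_⟩
    · rw [h3 p hp]; exact hl
    · rw [hc, h4 p hp ⟨l, hl⟩ c]
  have hmaps : ∀ q ∈ B.Reach m, φ q ∈ B.Reach (φ m) := by
    intro q hq
    induction hq with
    | refl => exact Relation.ReflTransGen.refl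
    | tail hviab hstep ih =>
      exact Relation.ReflTransGen.tail ih (hedge _ _ (hsub hviab) hstep)
  have hsurj : ∀ q', Relation.ReflTransGen B.Edge (φ m) q' → ∃ q ∈ B.Reach m, φ q = q' := by
    intro q' hq'
    induction hq' with
    | refl => exact ⟨m, Relation.ReflTransGen.refl, rfl⟩
    | tail hviab hstep ih =>
      obtain ⟨p, hp, rfl⟩ := ih
      obtain ⟨⟨l, hl⟩, c, rfl⟩ := hstep
      have hpn : p ∈ B.Reach n := hsub hp
      have hpd : B.IsDecision p := ⟨l, by rw [← h3 p hpn]; exact hl⟩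
      exact ⟨B.succ p c, Relation.ReflTransGen.tail hp ⟨hpd, c, rfl⟩, h4 p hpn hpd c⟩
  refine ⟨φ, ⟨hmaps, h1.injOn.mono hsub, ?_⟩, rfl, fun q hq => h3 q (hsub hq),
    fun q hq => h4 q (hsub hq)⟩
  intro q' hq'
  obtain ⟨q, hq, rfl⟩ := hsurj q' hq'
  exact ⟨q, hq, rfl⟩

variable [Fintype PVar] (B : DD PVar Act) (γ : PVar → APred Var) (π : PVar → ℕ)

/-- distinct nodes of the constructed diagram are never isomorphic -/
theorem iso_eq : ∀ (t : T PVar Act) (ht : t ∈ (rootT B γ π).subts)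
    (n' : (BDD' B γ π).N), (BDD' B γ π).Iso ⟨t, ht⟩ n' → n'.1 = t := by
  intro t
  induction t with
  | leaf A =>
    rintro ht n' ⟨φ, h1, h2, h3, h4⟩
    have hlab : (BDD' B γ π).label n' = Sum.inr A := by
      rw [← h2, h3 _ Relation.ReflTransGen.refl]
      exact rfl
    obtain ⟨t', ht'⟩ := n'
    cases t' with
    | leaf A' =>
      have h' : (Sum.inr A' : PVar ⊕ Set Act) = Sum.inr A := hlab
      have hA := Sum.inr.inj h'
      show T.leaf A' = T.leaf A
      rw [hA]
    | node y a' b' =>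
      exact absurd (show (Sum.inl y : PVar ⊕ Set Act) = Sum.inr A from hlab) Sum.inl_ne_inr
  | node x a b iha ihb =>
    rintro ht n' ⟨φ, h1, h2, h3, h4⟩
    have hroot : (⟨T.node x a b, ht⟩ : (BDD' B γ π).N) ∈
        (BDD' B γ π).Reach ⟨T.node x a b, ht⟩ := Relation.ReflTransGen.refl
    have hlab : (BDD' B γ π).label n' = Sum.inl x := by
      rw [← h2, h3 _ hroot]
      exact rfl
    obtain ⟨t', ht'⟩ := n'
    cases t' with
    | leaf A' =>
      exact absurd (show (Sum.inr A' : PVar ⊕ Set Act) = Sum.inl x from hlab) Sum.inr_ne_inl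
    | node y a' b' =>
      have hxy : y = x := Sum.inl.inj (show (Sum.inl y : PVar ⊕ Set Act) = Sum.inl x from hlab)
      subst hxy
      have hdec : (BDD' B γ π).IsDecision ⟨T.node y a b, ht⟩ := ⟨y, rfl⟩
      have h4a := h4 _ hroot hdec false
      rw [h2] at h4a
      have hisoA := iso_sub (BDD' B γ π) φ _ _ h1 h2 h3 h4 (reach_succ _ hdec false)
      rw [h4a] at hisoA
      have ha : a' = a := iha (T.subts_subset ht T.mem_subts_left) _ hisoA
      have h4b := h4 _ hroot hdec true
      rw [h2] at h4b
      have hisoB := iso_sub (BDD' B γ π) φ _ _ h1 h2 h3 h4 (reach_succ _ hdec true)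
      rw [h4b] at hisoB
      have hb : b' = b := ihb (T.subts_subset ht T.mem_subts_right) _ hisoB
      show T.node y a' b' = T.node y a b
      rw [ha, hb]

end PCAux
namespace PCAux

open Classical Function

theorem relabel_follow {L L' Act : Type} (B : DD L Act) (γ : L → L') :
    ∀ (bs : List Bool) (n : B.N), (B.relabel γ).follow n bs = B.follow n bs := by
  intro bs
  induction bs with
  | nil => intro n; rfl
  | cons c bs ih => intro n; exact ih (B.succ n c)

variable {Var PVar Act : Type} [Fintype PVar]
variable (B : DD PVar Act) (γ : PVar → APred Var) (π : PVar → ℕ)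

theorem BDD'_reduced (hπ : Function.Injective π) : (BDD' B γ π).Reduced := by
  constructor
  · rintro ⟨t, ht⟩ ⟨l, hl⟩
    cases t with
    | leaf A => exact absurd (show (Sum.inr A : PVar ⊕ Set Act) = Sum.inl l from hl) Sum.inr_ne_inl
    | node x a b =>
      intro he
      have hab : a = b := congrArg Subtype.val he
      exact build_ess B γ π _ _ _ ht hab
  · rintro ⟨t, ht⟩ n' hiso
    exact (Subtype.ext (iso_eq B γ π t ht n' hiso)).symm

theorem BDD'_ordered : (BDD' B γ π).Ordered π := by
  rintro ⟨t, ht⟩ c l l' hl hl'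
  cases t with
  | leaf A => exact absurd (show (Sum.inr A : PVar ⊕ Set Act) = Sum.inl l from hl) Sum.inr_ne_inl
  | node x a b =>
    have hxl : x = l := Sum.inl.inj (show (Sum.inl x : PVar ⊕ Set Act) = Sum.inl l from hl)
    subst hxl
    obtain ⟨-, h2⟩ := build_ord B γ π _ _ _ ht
    cases c
    · -- successor is ⟨a, _⟩
      cases a with
      | leaf A' =>
        exact absurd (show (Sum.inr A' : PVar ⊕ Set Act) = Sum.inl l' from hl') Sum.inr_ne_inl
      | node z a2 b2 =>
        have hzl : z = l' :=
          Sum.inl.inj (show (Sum.inl z : PVar ⊕ Set Act) = Sum.inl l' from hl')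
        subst hzl
        exact h2 (Or.inl (T.mem_subts_self _))
    · cases b with
      | leaf A' =>
        exact absurd (show (Sum.inr A' : PVar ⊕ Set Act) = Sum.inl l' from hl') Sum.inr_ne_inl
      | node z a2 b2 =>
        have hzl : z = l' :=
          Sum.inl.inj (show (Sum.inl z : PVar ⊕ Set Act) = Sum.inl l' from hl')
        subst hzl
        exact h2 (Or.inr (T.mem_subts_self _))

theorem BDD'_consistent (hπ : Function.Injective π) :
    PDD.Consistent ((BDD' B γ π).relabel γ) := by
  intro bs _
  obtain ⟨ε, -, hcons⟩ :=
    build_consist B γ π hπ ((Finset.univ.sup π) + 1) 0 (fun _ => false) bs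
      (Real.zero γ π _)
  refine ⟨ε, ?_⟩
  intro i h p hp
  erw [relabel_follow] at hp
  have hroot : ((BDD' B γ π).relabel γ).root = (BDD' B γ π).root := rfl
  rw [hroot] at hp
  have hval := follow_val B γ π (bs.take i) (BDD' B γ π).root
  cases hE : (BDD' B γ π).follow (BDD' B γ π).root (bs.take i) with
  | mk t htm =>
    rw [hE] at hp hval
    cases t with
    | leaf A =>
      exact absurd
        (show (Sum.inr A : APred Var ⊕ Set Act) = Sum.inl p from hp) Sum.inr_ne_inl
    | node x a b =>
      have hpx : γ x = p :=
        Sum.inl.inj (show (Sum.inl (γ x) : APred Var ⊕ Set Act) = Sum.inl p from hp)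
      rw [← hpx]
      exact hcons i h hval.symm

theorem BDD'_sem (hπ : Function.Injective π) (ε : Var → ℚ) :
    (BDD' B γ π).sem (liftEval γ ε) = B.sem (liftEval γ ε) := by
  have h1 : (BDD' B γ π).sem (liftEval γ ε)
      = T.evalT (liftEval γ ε) (rootT B γ π) :=
    semNode_eval B γ π (rootT B γ π) (T.mem_subts_self _) (liftEval γ ε)
  rw [h1]
  exact build_sem B γ π hπ ((Finset.univ.sup π) + 1) 0 (fun _ => false)
    (lt_bound π) ε (fun x hx => absurd hx (Nat.not_lt_zero _))

end PCAux
/-- For every reduced `π`-ordered BDD `B` over `PVar` and `Act`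
and every bijection `γ` from `PVar` onto a set of axis-aligned predicates, there
is a reduced `π`-ordered BDD `B'` that is predicate consistent w.r.t. `γ`
(i.e. the PDD `γ(B')` is consistent) and has the same semantics modulo `γ` as `B`. -/
theorem predicate_consistency
    {Var PVar Act : Type} [Countable Var] [Fintype PVar] [Fintype Act]
    (B : DD PVar Act) (π : PVar → ℕ) (hπ : Function.Injective π)
    (hred : B.Reduced) (hord : B.Ordered π)
    (γ : PVar → APred Var) (hγ : Function.Injective γ) :
    ∃ B' : DD PVar Act, B'.Reduced ∧ B'.Ordered π ∧
      PDD.Consistent (B'.relabel γ) ∧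
      ∀ ε : Var → ℚ, B'.sem (liftEval γ ε) = B.sem (liftEval γ ε) := by
  exact ⟨PCAux.BDD' B γ π, PCAux.BDD'_reduced B γ π hπ, PCAux.BDD'_ordered B γ π,
    PCAux.BDD'_consistent B γ π hπ, PCAux.BDD'_sem B γ π hπ⟩
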